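/- Let A ∈ ℝ^{m×m}, let B = ½(A + Aᵀ) be its symmetric part with eigendecomposition B = Z diag(λ_1,…,λ_m) Zᵀ where Z is orthogonal, and let 0 < ε ≤ ε̄ < ∞. Then the unique minimizer of X ↦ ‖A − X‖_F² over X ∈ SPD^spec_{[ε,ε̄]}(m) is Z Y Zᵀ, where Y = diag(d_1,…,d_m) with d_i = λ_i if λ_i ∈ [ε,ε̄], d_i = ε̄ if λ_i > ε̄, and d_i = ε if λ_i < ε. -/

import Mathlib

open Matrix BigOperators

/-- The Frobenius norm of a real square matrix. -/
noncomputable def frobNorm {m : ℕ} (A : Matrix (Fin m) (Fin m) ℝ) : ℝ :=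
  Real.sqrt (∑ i, ∑ j, (A i j) ^ 2)

/-- Symmetric positive definite matrices whose spectrum is contained in `[a, b]`. -/
def SPDspec {m : ℕ} (a b : ℝ) : Set (Matrix (Fin m) (Fin m) ℝ) :=
  {M | M.PosDef ∧ ∀ μ ∈ spectrum ℝ M, μ ∈ Set.Icc a b}

/-- The squared Frobenius norm, as a sum of squares. -/
noncomputable def frobSq {m : ℕ} (A : Matrix (Fin m) (Fin m) ℝ) : ℝ :=
  ∑ i, ∑ j, (A i j) ^ 2

lemma frobNorm_sq_eq {m : ℕ} (A : Matrix (Fin m) (Fin m) ℝ) :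
    frobNorm A ^ 2 = frobSq A := by
  rw [frobNorm, frobSq, Real.sq_sqrt]
  positivity

lemma frobSq_eq_trace {m : ℕ} (A : Matrix (Fin m) (Fin m) ℝ) :
    frobSq A = (Aᵀ * A).trace := by
  rw [frobSq, Matrix.trace, Finset.sum_comm]
  simp [Matrix.mul_apply, Matrix.diag, sq]

lemma frobSq_conj {m : ℕ} (Z M : Matrix (Fin m) (Fin m) ℝ)
    (hZ : Z * Zᵀ = 1) : frobSq (Zᵀ * M * Z) = frobSq M := by
  rw [frobSq_eq_trace, frobSq_eq_trace]
  have h : (Zᵀ * M * Z)ᵀ * (Zᵀ * M * Z) = Zᵀ * Mᵀ * (Z * Zᵀ) * M * Z := by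
    simp only [Matrix.transpose_mul, Matrix.transpose_transpose]; noncomm_ring
  rw [h, hZ, Matrix.mul_one, Matrix.trace_mul_comm, ← Matrix.mul_assoc, ← Matrix.mul_assoc,
    hZ, Matrix.one_mul]

lemma frobSq_add_orth {m : ℕ} {P Q : Matrix (Fin m) (Fin m) ℝ}
    (hP : Pᵀ = -P) (hQ : Qᵀ = Q) :
    frobSq (P + Q) = frobSq P + frobSq Q := by
  have hcross : ∑ i, ∑ j, P i j * Q i j = 0 := by
    have h1 : ∑ i : Fin m, ∑ j : Fin m, P i j * Q i j
        = ∑ i : Fin m, ∑ j : Fin m, P j i * Q j i := by rw [Finset.sum_comm]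
    have h2 : ∑ i : Fin m, ∑ j : Fin m, P j i * Q j i
        = -∑ i : Fin m, ∑ j : Fin m, P i j * Q i j := by
      rw [← Finset.sum_neg_distrib]
      refine Finset.sum_congr rfl fun i _ => ?_
      rw [← Finset.sum_neg_distrib]
      refine Finset.sum_congr rfl fun j _ => ?_
      have hp : P j i = -P i j := by
        have := congrFun (congrFun hP i) j
        simpa [Matrix.transpose_apply] using this
      have hq : Q j i = Q i j := by
        have := congrFun (congrFun hQ i) j
        simpa [Matrix.transpose_apply] using this
      rw [hp, hq]; ring
    linarith [h1.trans h2]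
  simp only [frobSq, Matrix.add_apply]
  have h3 : ∀ i : Fin m, ∑ j, (P i j + Q i j)^2
      = (∑ j, P i j ^2) + (∑ j, Q i j ^2) + 2 * ∑ j, P i j * Q i j := by
    intro i
    rw [← Finset.sum_add_distrib, Finset.mul_sum, ← Finset.sum_add_distrib]
    exact Finset.sum_congr rfl fun j _ => by ring
  simp only [h3]
  rw [Finset.sum_add_distrib, Finset.sum_add_distrib, ← Finset.mul_sum, hcross]
  ring

lemma clip_min {lam ε εbar dd t : ℝ} (hε : 0 < ε) (hεε : ε ≤ εbar)
    (hd : dd = if lam < ε then ε else if εbar < lam then εbar else lam)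
    (ht1 : ε ≤ t) (ht2 : t ≤ εbar) :
    (lam - dd)^2 ≤ (lam - t)^2 ∧ ((lam - t)^2 = (lam - dd)^2 → t = dd) := by
  split_ifs at hd with h1 h2 <;> subst hd
  · exact ⟨by nlinarith, fun h => by nlinarith⟩
  · exact ⟨by nlinarith, fun h => by nlinarith⟩
  · push_neg at h1 h2
    constructor
    · simpa using sq_nonneg (dd - t)
    · intro h
      have h0 : (dd - t)^2 = 0 := by simpa using h
      have := pow_eq_zero_iff (n := 2) two_ne_zero |>.mp h0
      linarith

/-- The diagonal entries of a real symmetric matrix with spectrum in `[a,b]` lie in `[a,b]`. -/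
lemma diag_mem {m : ℕ} {W : Matrix (Fin m) (Fin m) ℝ} (hW : W.IsHermitian)
    {a b : ℝ} (hspec : ∀ μ ∈ spectrum ℝ W, μ ∈ Set.Icc a b) (i : Fin m) :
    a ≤ W i i ∧ W i i ≤ b := by
  have hst := hW.spectral_theorem
  set U := (hW.eigenvectorUnitary : Matrix (Fin m) (Fin m) ℝ) with hU
  have hUU : U * star U = 1 := Matrix.mem_unitaryGroup_iff.mp hW.eigenvectorUnitary.2
  have hsum1 : ∑ k, (U i k)^2 = 1 := by
    have := congrFun (congrFun hUU i) i
    simpa [Matrix.mul_apply, Matrix.one_apply, Matrix.conjTranspose_apply, sq] using this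
  have hWii : W i i = ∑ k, hW.eigenvalues k * (U i k)^2 := by
    conv_lhs => rw [hst]
    simp only [Unitary.conjStarAlgAut_apply, Matrix.mul_apply, Matrix.conjTranspose_apply, Matrix.diagonal_apply,
      Function.comp_apply, RCLike.ofReal_real_eq_id, id_eq, star_trivial,
      Matrix.star_apply, mul_ite, ite_mul, mul_zero, zero_mul, Finset.sum_ite_eq',
      Finset.mem_univ, if_true]
    exact Finset.sum_congr rfl fun k _ => by ring
  have heig : ∀ k, a ≤ hW.eigenvalues k ∧ hW.eigenvalues k ≤ b := fun k =>
    hspec _ (hW.eigenvalues_mem_spectrum_real k)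
  constructor
  · calc a = a * ∑ k, (U i k)^2 := by rw [hsum1, mul_one]
    _ = ∑ k, a * (U i k)^2 := Finset.mul_sum _ _ _
    _ ≤ ∑ k, hW.eigenvalues k * (U i k)^2 :=
        Finset.sum_le_sum fun k _ => mul_le_mul_of_nonneg_right (heig k).1 (sq_nonneg _)
    _ = W i i := hWii.symm
  · calc W i i = ∑ k, hW.eigenvalues k * (U i k)^2 := hWii
    _ ≤ ∑ k, b * (U i k)^2 :=
        Finset.sum_le_sum fun k _ => mul_le_mul_of_nonneg_right (heig k).2 (sq_nonneg _)
    _ = b * ∑ k, (U i k)^2 := (Finset.mul_sum _ _ _).symm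
    _ = b := by rw [hsum1, mul_one]

/-- Eigenvalue clipping gives the unique nearest matrix (in Frobenius norm) in
`SPD^spec_{[ε,ε̄]}` to an arbitrary matrix `A`. -/
theorem clipped_matrix_is_unique_minimizer {m : ℕ} (A B Z : Matrix (Fin m) (Fin m) ℝ)
    (lam : Fin m → ℝ) (ε εbar : ℝ) (hε : 0 < ε) (hεε : ε ≤ εbar)
    (hB : B = (1 / 2 : ℝ) • (A + Aᵀ))
    (hZ : Z * Zᵀ = 1) (hZ' : Zᵀ * Z = 1)
    (hdec : B = Z * Matrix.diagonal lam * Zᵀ)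
    (d : Fin m → ℝ)
    (hd : ∀ i, d i = if lam i < ε then ε else if εbar < lam i then εbar else lam i) :
    Z * Matrix.diagonal d * Zᵀ ∈ SPDspec ε εbar ∧
      (∀ X ∈ SPDspec ε εbar,
        frobNorm (A - Z * Matrix.diagonal d * Zᵀ) ^ 2 ≤ frobNorm (A - X) ^ 2) ∧
      (∀ X ∈ SPDspec ε εbar,
        frobNorm (A - X) ^ 2 = frobNorm (A - Z * Matrix.diagonal d * Zᵀ) ^ 2 →
          X = Z * Matrix.diagonal d * Zᵀ) := by
  set D := Matrix.diagonal lam with hD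
  set Y := Matrix.diagonal d with hYdef
  set C := Z * Y * Zᵀ with hCdef
  -- bounds on d
  have hdlo : ∀ i, ε ≤ d i := by
    intro i; rw [hd i]; split_ifs with h1 h2 <;> linarith
  have hdhi : ∀ i, d i ≤ εbar := by
    intro i; rw [hd i]; split_ifs with h1 h2 <;> linarith
  -- the unit given by Z
  set u : (Matrix (Fin m) (Fin m) ℝ)ˣ := ⟨Z, Zᵀ, hZ, hZ'⟩ with hu
  -- spectrum of C
  have hspecC : spectrum ℝ C = Set.range d := by
    have h1 : spectrum ℝ ((u : Matrix (Fin m) (Fin m) ℝ) * Y * (↑u⁻¹ : Matrix (Fin m) (Fin m) ℝ))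
        = spectrum ℝ Y := spectrum.units_conjugate
    have h2 : C = (u : Matrix (Fin m) (Fin m) ℝ) * Y * (↑u⁻¹ : Matrix (Fin m) (Fin m) ℝ) := rfl
    rw [h2, h1, hYdef, spectrum_diagonal]
  -- transpose facts
  have hBt : Bᵀ = B := by
    rw [hB]; simp [Matrix.transpose_add, add_comm]
  have hCt : Cᵀ = C := by
    rw [hCdef, Matrix.transpose_mul, Matrix.transpose_mul, Matrix.transpose_transpose,
      hYdef, Matrix.diagonal_transpose, Matrix.mul_assoc]
  -- membership
  have hmem : C ∈ SPDspec ε εbar := by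
    constructor
    · rw [Matrix.posDef_iff_dotProduct_mulVec]; constructor
      · show Cᴴ = C
        rw [Matrix.conjTranspose_eq_transpose_of_trivial, hCt]
      · intro x hx
        have hy : ∀ w : Fin m → ℝ, C *ᵥ w = Z *ᵥ (Y *ᵥ (Zᵀ *ᵥ w)) := by
          intro w; rw [Matrix.mulVec_mulVec, Matrix.mulVec_mulVec]
        set y := Zᵀ *ᵥ x with hy2
        have hyne : y ≠ 0 := by
          intro h0
          apply hx
          have : (Z * Zᵀ) *ᵥ x = Z *ᵥ y := by rw [← Matrix.mulVec_mulVec]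
          rw [hZ, Matrix.one_mulVec] at this
          rw [this, h0, Matrix.mulVec_zero]
        have hdot : star x ⬝ᵥ (C *ᵥ x) = ∑ i, d i * (y i)^2 := by
          rw [hy x, star_trivial, Matrix.dotProduct_mulVec, ← Matrix.mulVec_transpose]
          simp [Matrix.mulVec_diagonal, dotProduct, hYdef, sq, hy2]
          exact Finset.sum_congr rfl fun i _ => by ring
        rw [hdot]
        obtain ⟨i0, hi0⟩ : ∃ i, y i ≠ 0 := by
          by_contra h; push_neg at h; exact hyne (funext h)
        refine Finset.sum_pos' (fun i _ => ?_) ⟨i0, Finset.mem_univ i0, ?_⟩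
        · exact mul_nonneg (le_of_lt (lt_of_lt_of_le hε (hdlo i))) (sq_nonneg _)
        · exact mul_pos (lt_of_lt_of_le hε (hdlo i0)) (by positivity)
    · intro μ hμ
      rw [hspecC] at hμ
      obtain ⟨i, rfl⟩ := hμ
      exact ⟨hdlo i, hdhi i⟩
  -- skew-symmetric part
  set S := A - B with hSdef
  have hSt : Sᵀ = -S := by
    rw [hSdef, Matrix.transpose_sub, hBt, hB]
    ext i j
    simp [Matrix.transpose_apply]
    ring
  -- Zᵀ B Z = D
  have hZBZ : Zᵀ * B * Z = D := by
    rw [hdec, ← Matrix.mul_assoc, ← Matrix.mul_assoc, hZ', Matrix.one_mul, Matrix.mul_assoc,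
      hZ', Matrix.mul_one]
  -- decomposition of frobSq for symmetric X
  have hkey : ∀ X : Matrix (Fin m) (Fin m) ℝ, Xᵀ = X →
      frobSq (A - X) = frobSq S + frobSq (D - Zᵀ * X * Z) := by
    intro X hXt
    have h1 : A - X = S + (B - X) := by rw [hSdef]; abel
    have h2 : (B - X)ᵀ = B - X := by rw [Matrix.transpose_sub, hBt, hXt]
    rw [h1, frobSq_add_orth hSt h2]
    congr 1
    rw [← frobSq_conj Z (B - X) hZ]
    congr 1
    rw [Matrix.mul_sub, Matrix.sub_mul, hZBZ]
  -- frobSq (D - Y) = ∑ (lam i - d i)^2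
  have hDY : frobSq (D - Y) = ∑ i, (lam i - d i)^2 := by
    rw [frobSq]
    have : ∀ i j : Fin m, (D - Y) i j = if i = j then lam i - d i else 0 := by
      intro i j
      simp [hD, hYdef, Matrix.diagonal_apply]
      split_ifs <;> simp
    simp only [this, apply_ite (· ^ 2)]
    simp [Finset.sum_ite_eq']
  -- Zᵀ C Z = Y
  have hZCZ : Zᵀ * C * Z = Y := by
    rw [hCdef, ← Matrix.mul_assoc, ← Matrix.mul_assoc, hZ', Matrix.one_mul, Matrix.mul_assoc,
      hZ', Matrix.mul_one]
  -- main comparison for X in SPDspec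
  have hmain : ∀ X ∈ SPDspec (m := m) ε εbar,
      frobSq (D - Y) ≤ frobSq (D - Zᵀ * X * Z) ∧
      (frobSq (D - Zᵀ * X * Z) = frobSq (D - Y) → Zᵀ * X * Z = Y) := by
    rintro X ⟨hXpd, hXspec⟩
    set W := Zᵀ * X * Z with hWdef
    have hXh : X.IsHermitian := hXpd.1
    have hXt : Xᵀ = X := by
      rw [← Matrix.conjTranspose_eq_transpose_of_trivial]; exact hXh
    have hWh : W.IsHermitian := by
      show Wᴴ = W
      rw [Matrix.conjTranspose_eq_transpose_of_trivial, hWdef, Matrix.transpose_mul,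
        Matrix.transpose_mul, Matrix.transpose_transpose, hXt, Matrix.mul_assoc]
    have hspecW : spectrum ℝ W = spectrum ℝ X := by
      have h2 : W = (↑u⁻¹ : Matrix (Fin m) (Fin m) ℝ) * X * (u : Matrix (Fin m) (Fin m) ℝ) := by
        rfl
      rw [h2, spectrum.units_conjugate']
    have hWdiag : ∀ i, ε ≤ W i i ∧ W i i ≤ εbar := by
      intro i
      exact diag_mem hWh (fun μ hμ => hXspec μ (hspecW ▸ hμ)) i
    -- pointwise bound
    have hpoint : ∀ i j : Fin m, (if i = j then (lam i - d i)^2 else 0) ≤ ((D - W) i j)^2 := by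
      intro i j
      by_cases hij : i = j
      · subst hij
        simp only [if_pos rfl, Matrix.sub_apply, hD, Matrix.diagonal_apply_eq]
        exact (clip_min hε hεε (hd i) (hWdiag i).1 (hWdiag i).2).1
      · simp [hij, sq_nonneg]
    have hsum : frobSq (D - Y) ≤ frobSq (D - W) := by
      rw [hDY, frobSq]
      calc ∑ i, (lam i - d i)^2
          = ∑ i, ∑ j, (if i = j then (lam i - d i)^2 else 0) := by
            simp [Finset.sum_ite_eq']
      _ ≤ ∑ i, ∑ j, ((D - W) i j)^2 :=
            Finset.sum_le_sum fun i _ => Finset.sum_le_sum fun j _ => hpoint i j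
    refine ⟨hsum, fun heq => ?_⟩
    -- equality analysis
    have hsums : ∑ i, ∑ j, (if i = j then (lam i - d i)^2 else 0)
        = ∑ i, ∑ j, ((D - W) i j)^2 := by
      have e1 : ∑ i : Fin m, ∑ j : Fin m, (if i = j then (lam i - d i)^2 else 0)
          = frobSq (D - Y) := by
        rw [hDY]; simp [Finset.sum_ite_eq']
      rw [e1, ← heq, frobSq]
    have hinner : ∀ i ∈ Finset.univ (α := Fin m),
        ∑ j, (if i = j then (lam i - d i)^2 else 0) = ∑ j, ((D - W) i j)^2 := by
      rw [← Finset.sum_eq_sum_iff_of_le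
        (fun i _ => Finset.sum_le_sum fun j _ => hpoint i j)]
      exact hsums
    have hterm : ∀ i j : Fin m, (if i = j then (lam i - d i)^2 else 0) = ((D - W) i j)^2 := by
      intro i j
      have := (Finset.sum_eq_sum_iff_of_le (fun j _ => hpoint i j)).mp
        (hinner i (Finset.mem_univ i)) j (Finset.mem_univ j)
      exact this
    have hWY : W = Y := by
      ext i j
      by_cases hij : i = j
      · subst hij
        have h := hterm i i
        simp only [if_pos rfl, Matrix.sub_apply, hD, Matrix.diagonal_apply_eq] at h
        have := (clip_min hε hεε (hd i) (hWdiag i).1 (hWdiag i).2).2 h.symm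
        simp [hYdef, Matrix.diagonal_apply_eq, this]
      · have h := hterm i j
        simp only [if_neg hij, Matrix.sub_apply, hD, Matrix.diagonal_apply_ne _ hij] at h
        have h0 : (0 - W i j)^2 = 0 := h.symm
        have : 0 - W i j = 0 := pow_eq_zero_iff (n := 2) two_ne_zero |>.mp h0
        simp [hYdef, Matrix.diagonal_apply_ne _ hij]
        linarith
    exact hWY
  -- conclude
  refine ⟨hmem, ?_, ?_⟩
  · intro X hX
    rw [frobNorm_sq_eq, frobNorm_sq_eq, hkey X
      (by rw [← Matrix.conjTranspose_eq_transpose_of_trivial]; exact hX.1.1),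
      hkey C hCt, hZCZ]
    have := (hmain X hX).1
    linarith
  · intro X hX heq
    have hXt : Xᵀ = X := by
      rw [← Matrix.conjTranspose_eq_transpose_of_trivial]; exact hX.1.1
    rw [frobNorm_sq_eq, frobNorm_sq_eq, hkey X hXt, hkey C hCt, hZCZ] at heq
    have heq2 : frobSq (D - Zᵀ * X * Z) = frobSq (D - Y) := by linarith
    have hWY := (hmain X hX).2 heq2
    calc X = (Z * Zᵀ) * X * (Z * Zᵀ) := by rw [hZ, Matrix.one_mul, Matrix.mul_one]
    _ = Z * (Zᵀ * X * Z) * Zᵀ := by noncomm_ring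
    _ = Z * Y * Zᵀ := by rw [hWY]
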